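/- Fix positive integers m₁, m₂, s₁, s₂. Let L, I₀, K₀ be finitely supported functions ℤ×ℤ → ℝ with K₀ in the simplex S and supported in the m₁×m₂ grid, and set B = I₀⊗K₀. Let (κ_i)_{i=1,…,s₁s₂} be functions supported in the s₁×s₂ grid with ‖κ_i‖_F = 1 for every i, set σ_i = ‖(L⊗B)⊗κ_i‖_F, and assume σ_i > 0 for all i. Suppose τ > 0 satisfies ‖(L⊗I₀)⊗X‖_F ≥ τ·‖X‖_F for every X supported in the (m₁+s₁−1)×(m₂+s₂−1) grid. Then the regularizer h(K) = ∑_{i=1}^{s₁s₂} ‖K⊗κ_i‖_F²/σ_i² satisfies h(K₀) ≤ s₁s₂ / τ². -/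

import Mathlib

/-- Images, kernels, and filters: finitely supported functions `ℤ × ℤ → ℝ`. -/
abbrev Img := (ℤ × ℤ) →₀ ℝ

/-- Discrete 2D convolution: `(X ⊗ Y)(i,j) = ∑_{(u,v)} X((i,j)-(u,v)) * Y(u,v)`. -/
noncomputable def conv (X Y : Img) : Img :=
  X.sum fun a xa => Y.sum fun b yb => Finsupp.single (a + b) (xa * yb)

/-- Frobenius norm `‖X‖_F = √(∑ X(i,j)²)`. -/
noncomputable def frob (X : Img) : ℝ := Real.sqrt (X.sum fun _ c => c ^ 2)

/-- Inner product `⟨X, Y⟩ = ∑ X(i,j) * Y(i,j)`. -/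
noncomputable def inner2 (X Y : Img) : ℝ := X.sum fun p c => c * Y p

/-- ℓ¹ norm `‖X‖₁ = ∑ |X(i,j)|`. -/
noncomputable def l1 (X : Img) : ℝ := X.sum fun _ c => |c|

/-- The simplex `S` of blur kernels: nonnegative entries summing to one. -/
def InSimplex (K : Img) : Prop := (∀ p, 0 ≤ K p) ∧ (K.sum fun _ c => c) = 1

/-- `X` is supported in the `a × b` grid `{0,…,a-1} × {0,…,b-1}`. -/
def SuppIn (a b : ℕ) (X : Img) : Prop :=
  ∀ p : ℤ × ℤ, ¬(0 ≤ p.1 ∧ p.1 < (a : ℤ) ∧ 0 ≤ p.2 ∧ p.2 < (b : ℤ)) → X p = 0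

/-- Multiplication in the additive monoid algebra, i.e. convolution. -/
noncomputable def amul (X Y : Img) : Img :=
  ((AddMonoidAlgebra.ofCoeff X : AddMonoidAlgebra ℝ (ℤ × ℤ)) * AddMonoidAlgebra.ofCoeff Y).coeff

lemma conv_eq_mul (X Y : Img) : conv X Y = amul X Y := by
  rw [amul, AddMonoidAlgebra.mul_def]
  simp only [AddMonoidAlgebra.coeff_finsuppSum, AddMonoidAlgebra.coeff_single]; rfl

lemma conv_assoc (X Y Z : Img) : conv (conv X Y) Z = conv X (conv Y Z) := by
  simp only [conv_eq_mul, amul, AddMonoidAlgebra.ofCoeff_coeff]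
  exact congrArg AddMonoidAlgebra.coeff (mul_assoc (G := AddMonoidAlgebra ℝ (ℤ × ℤ)) _ _ _)

lemma frob_nonneg (X : Img) : 0 ≤ frob X := Real.sqrt_nonneg _

lemma supp_conv {m₁ m₂ s₁ s₂ : ℕ} {X Y : Img} (hX : SuppIn m₁ m₂ X) (hY : SuppIn s₁ s₂ Y) :
    SuppIn (m₁ + s₁ - 1) (m₂ + s₂ - 1) (conv X Y) := by
  intro p hp
  rw [conv_eq_mul]
  by_contra h
  have hmem : p ∈ (amul X Y).support := Finsupp.mem_support_iff.2 h
  have := AddMonoidAlgebra.support_coeff_mul_subset (AddMonoidAlgebra.ofCoeff X) (AddMonoidAlgebra.ofCoeff Y) hmem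
  rw [Finset.mem_add] at this
  obtain ⟨a, ha, b, hb, rfl⟩ := this
  have ha' : ¬ X a = 0 := Finsupp.mem_support_iff.1 ha
  have hb' : ¬ Y b = 0 := Finsupp.mem_support_iff.1 hb
  have h1 : 0 ≤ a.1 ∧ a.1 < (m₁ : ℤ) ∧ 0 ≤ a.2 ∧ a.2 < (m₂ : ℤ) := by
    by_contra hc; exact ha' (hX a hc)
  have h2 : 0 ≤ b.1 ∧ b.1 < (s₁ : ℤ) ∧ 0 ≤ b.2 ∧ b.2 < (s₂ : ℤ) := by
    by_contra hc; exact hb' (hY b hc)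
  apply hp
  have e1 : ((m₁ + s₁ - 1 : ℕ) : ℤ) = (m₁ : ℤ) + s₁ - 1 := by omega
  have e2 : ((m₂ + s₂ - 1 : ℕ) : ℤ) = (m₂ : ℤ) + s₂ - 1 := by omega
  refine ⟨?_, ?_, ?_, ?_⟩ <;> simp only [Prod.fst_add, Prod.snd_add, e1, e2] <;> omega

/-- The regularizer evaluated at the true kernel is at most `s₁s₂ / τ²` (noiseless case). -/
theorem regularizer_at_true_kernel_noiseless (m₁ m₂ s₁ s₂ : ℕ)
    (hm₁ : 0 < m₁) (hm₂ : 0 < m₂) (hs₁ : 0 < s₁) (hs₂ : 0 < s₂)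
    (L I₀ K₀ B : Img) (hK₀ : InSimplex K₀) (hK₀supp : SuppIn m₁ m₂ K₀)
    (hB : B = conv I₀ K₀)
    (κ : Fin (s₁ * s₂) → Img) (hκsupp : ∀ i, SuppIn s₁ s₂ (κ i))
    (hκnorm : ∀ i, frob (κ i) = 1)
    (σ : Fin (s₁ * s₂) → ℝ) (hσ : ∀ i, σ i = frob (conv (conv L B) (κ i)))
    (hσpos : ∀ i, 0 < σ i)
    (τ : ℝ) (hτ : 0 < τ)
    (hsharp : ∀ X : Img, SuppIn (m₁ + s₁ - 1) (m₂ + s₂ - 1) X →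
      τ * frob X ≤ frob (conv (conv L I₀) X)) :
    ∑ i, frob (conv K₀ (κ i)) ^ 2 / (σ i) ^ 2 ≤ (s₁ : ℝ) * (s₂ : ℝ) / τ ^ 2 := by
  have key : ∀ i, frob (conv K₀ (κ i)) ^ 2 / (σ i) ^ 2 ≤ 1 / τ ^ 2 := by
    intro i
    set f := frob (conv K₀ (κ i)) with hf
    have hf0 : 0 ≤ f := frob_nonneg _
    have hsupp : SuppIn (m₁ + s₁ - 1) (m₂ + s₂ - 1) (conv K₀ (κ i)) :=
      supp_conv hK₀supp (hκsupp i)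
    have hrw : conv (conv L B) (κ i) = conv (conv L I₀) (conv K₀ (κ i)) := by
      rw [hB]
      simp only [conv_eq_mul, amul, AddMonoidAlgebra.ofCoeff_coeff]
      congr 1; ring
    have hσi : τ * f ≤ σ i := by
      rw [hσ i, hrw]
      exact hsharp _ hsupp
    have hσpos' := hσpos i
    rw [div_le_div_iff₀ (by positivity) (by positivity)]
    have : (τ * f) ^ 2 ≤ (σ i) ^ 2 :=
      pow_le_pow_left₀ (by positivity) hσi 2
    nlinarith [this]
  calc ∑ i, frob (conv K₀ (κ i)) ^ 2 / (σ i) ^ 2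
      ≤ ∑ _i : Fin (s₁ * s₂), 1 / τ ^ 2 := Finset.sum_le_sum fun i _ => key i
    _ = (s₁ : ℝ) * (s₂ : ℝ) / τ ^ 2 := by
        rw [Finset.sum_const, Finset.card_univ, Fintype.card_fin]
        push_cast
        ring
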